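/- For all integers n ≥ 2 and i ≥ 1, the Horadam sequence satisfies W_{ni+i} = V_i^{n−1} · W_{2i} − (−q)^i · Σ_{j=1}^{n−1} V_i^{n−1−j} · W_{ij}, where V is the generalized Lucas sequence with the same parameters p, q. -/

import Mathlib

theorem horadam_key (p q : ℤ) (W V : ℕ → ℤ)
    (hW : ∀ n : ℕ, W (n + 2) = p * W (n + 1) + q * W n)
    (hV0 : V 0 = 2) (hV1 : V 1 = p)
    (hV : ∀ n : ℕ, V (n + 2) = p * V (n + 1) + q * V n)
    (i : ℕ) : ∀ m : ℕ, W (m + 2 * i) = V i * W (m + i) - (-q) ^ i * W m := by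
  induction i using Nat.twoStepInduction with
  | zero => intro m; simp [hV0]; ring
  | one =>
      intro m
      have h := hW m
      simp only [hV1]
      have : m + 2 * 1 = m + 2 := by ring
      rw [this, h]; ring
  | more i ih1 ih2 =>
      intro m
      have e1 : m + 2 * (i + 2) = m + 2 * i + 2 + 2 := by ring
      have e2 : m + 1 + 2 * (i + 1) = m + 2 * i + 2 + 1 := by ring
      have e3 : m + 2 + 2 * i = m + 2 * i + 2 := by ring
      have h1 := ih2 (m + 1)  -- claim (i+1) at m+1
      have h2 := ih1 (m + 2)  -- claim i at m+2
      rw [e2] at h1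
      rw [e3] at h2
      rw [e1, hW (m + 2 * i + 2), h1, h2]
      have hv := hV i
      have hw := hW m
      have e4 : m + 1 + (i + 1) = m + i + 2 := by ring
      have e5 : m + 2 + i = m + i + 2 := by ring
      rw [e4] at *
      rw [e5] at *
      have e6 : m + (i + 2) = m + i + 2 := by ring
      rw [e6]
      rw [hv, hw]
      ring

/-- Horadam sequence: W_{ni+i} = V_i^{n−1} · W_{2i} − (−q)^i · Σ_{j=1}^{n−1} V_i^{n−1−j} · W_{ij}. -/
theorem horadam_sum (a b p q : ℤ) (W V : ℕ → ℤ)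
    (hW0 : W 0 = a) (hW1 : W 1 = b)
    (hW : ∀ n : ℕ, W (n + 2) = p * W (n + 1) + q * W n)
    (hV0 : V 0 = 2) (hV1 : V 1 = p)
    (hV : ∀ n : ℕ, V (n + 2) = p * V (n + 1) + q * V n)
    (n i : ℕ) (hn : 2 ≤ n) (hi : 1 ≤ i) :
    W (n * i + i) = V i ^ (n - 1) * W (2 * i) -
      (-q) ^ i * ∑ j ∈ Finset.Icc 1 (n - 1), V i ^ (n - 1 - j) * W (i * j) := by
  have key := horadam_key p q W V hW hV0 hV1 hV i
  induction n, hn using Nat.le_induction with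
  | base =>
      simp only [show (2:ℕ) - 1 = 1 from rfl, Finset.Icc_self, Finset.sum_singleton]
      have h := key i
      have e : i + 2 * i = 2 * i + i := by ring
      rw [e] at h
      simp only [pow_one, Nat.sub_self, pow_zero, one_mul, mul_one]
      rw [show 2 * i + i = 2 * i + i from rfl, h, show i + i = 2 * i by ring]
  | succ n hn ih =>
      obtain ⟨k, rfl⟩ : ∃ k, n = k + 1 := ⟨n - 1, by omega⟩
      have hk : 1 ≤ k := by omega
      have ih' := ih
      simp only [Nat.add_sub_cancel] at ih' ⊢
      -- goal with exponent k+1, sum over Icc 1 (k+1)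
      rw [Finset.sum_Icc_succ_top (by omega : 1 ≤ k + 1)]
      have hs : ∑ j ∈ Finset.Icc 1 k, V i ^ (k + 1 - j) * W (i * j)
          = V i * ∑ j ∈ Finset.Icc 1 k, V i ^ (k - j) * W (i * j) := by
        rw [Finset.mul_sum]
        refine Finset.sum_congr rfl fun j hj => ?_
        have hjk : j ≤ k := (Finset.mem_Icc.mp hj).2
        rw [show k + 1 - j = (k - j) + 1 by omega, pow_succ]
        ring
      rw [hs]
      have h := key ((k + 1) * i)
      have e : (k + 1) * i + 2 * i = (k + 2) * i + i := by ring
      have e2 : (k + 1) * i + i = (k + 1) * i + i := rfl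
      rw [e] at h
      rw [h, ih']
      rw [show i * (k + 1) = (k + 1) * i by ring]
      simp only [Nat.sub_self, pow_zero, one_mul, mul_one]
      ring
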